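/- For every integer t ≥ 3, Lr(n, B_t) = Θ(n^{3/2}): there exist constants c₁, c₂ > 0 such that c₁·n^{3/2} ≤ Lr(n, B_t) ≤ c₂·n^{3/2} for all sufficiently large n, where B_t = K_2 + tK_1 is the book with t pages. -/

import Mathlib

open SimpleGraph Filter Topology

/-- `H` is contained in `G` as a subgraph (up to isomorphism):
there is an injective map preserving adjacency. -/
def GraphContains {α β : Type} (H : SimpleGraph α) (G : SimpleGraph β) : Prop :=
  ∃ f : α → β, Function.Injective f ∧ ∀ ⦃u v⦄, H.Adj u v → G.Adj (f u) (f v)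

/-- A family of (finite) graphs, given as a predicate on graphs on `Fin k` for every `k`. -/
def GraphFamily : Type :=
  ∀ ⦃k : ℕ⦄, SimpleGraph (Fin k) → Prop

/-- A family is hereditary if it is closed under taking subgraphs (up to isomorphism). -/
def GraphFamily.Hereditary (F : GraphFamily) : Prop :=
  ∀ {a b : ℕ} (H : SimpleGraph (Fin a)) (G : SimpleGraph (Fin b)),
    F G → GraphContains H G → F H

/-- The number of colors an edge coloring `c` uses on the edges of `K_n`. -/
noncomputable def numColors (n : ℕ) (c : Sym2 (Fin n) → ℕ) : ℕ :=
  (c '' {e : Sym2 (Fin n) | ¬ e.IsDiag}).ncard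

/-- Given a copy `φ` of `G` inside `K_n` and an edge coloring `c` of `K_n`,
the color class of color `i` within this copy, as a subgraph of `G`. -/
def colorClass {p n : ℕ} (G : SimpleGraph (Fin p)) (φ : Fin p → Fin n)
    (c : Sym2 (Fin n) → ℕ) (i : ℕ) : SimpleGraph (Fin p) where
  Adj u v := G.Adj u v ∧ c s(φ u, φ v) = i
  symm := by
    constructor
    intro u v ⟨h, hc⟩
    exact ⟨h.symm, by rwa [Sym2.eq_swap]⟩
  loopless := by
    constructor
    intro u ⟨h, _⟩
    exact G.loopless.irrefl u h

/-- The colored `K_n` given by `c` contains a copy of `G` in which every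
(nonempty) color class is a member of the family `F`. -/
def HasFColoredCopy (F : GraphFamily) {p : ℕ} (G : SimpleGraph (Fin p))
    {n : ℕ} (c : Sym2 (Fin n) → ℕ) : Prop :=
  ∃ φ : Fin p → Fin n, Function.Injective φ ∧
    ∀ i : ℕ, (colorClass G φ c i).edgeSet.Nonempty → F (colorClass G φ c i)

/-- `fF F G n` is the smallest `k` such that every edge coloring of `K_n` using at
least `k` colors contains an `F`-colored copy of `G`. -/
noncomputable def fF (F : GraphFamily) {p : ℕ} (G : SimpleGraph (Fin p)) (n : ℕ) : ℕ :=
  sInf {k | ∀ c : Sym2 (Fin n) → ℕ, k ≤ numColors n c → HasFColoredCopy F G c}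

/-- The `F`-deck of `G`: all graphs of the form `G - D` with `D ∈ F` a subgraph of `G`. -/
def deck (F : GraphFamily) {p : ℕ} (G : SimpleGraph (Fin p)) : Set (SimpleGraph (Fin p)) :=
  {H | ∃ D : SimpleGraph (Fin p), D ≤ G ∧ F D ∧ H = G \ D}

/-- The reduced chromatic number of `G` with respect to `F`. -/
noncomputable def chiF (F : GraphFamily) {p : ℕ} (G : SimpleGraph (Fin p)) : ℕ∞ :=
  sInf (SimpleGraph.chromaticNumber '' deck F G)

/-- The Turán number of a single graph `H`: the maximum number of edges of an
`n`-vertex graph containing no copy of `H`. -/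
noncomputable def exNum {a : ℕ} (n : ℕ) (H : SimpleGraph (Fin a)) : ℕ :=
  sSup {e | ∃ G : SimpleGraph (Fin n), ¬ GraphContains H G ∧ e = G.edgeSet.ncard}

/-- The Turán number of a family `𝓗` of graphs. -/
noncomputable def exNumFam {a : ℕ} (n : ℕ) (𝓗 : Set (SimpleGraph (Fin a))) : ℕ :=
  sSup {e | ∃ G : SimpleGraph (Fin n), (∀ H ∈ 𝓗, ¬ GraphContains H G) ∧ e = G.edgeSet.ncard}

/-- The family of matchings: graphs in which every vertex has at most one neighbor. -/
def matchingFamily : GraphFamily := fun {_} H =>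
  ∀ v u w, H.Adj v u → H.Adj v w → u = w

/-- The book with `t` pages, `B_t = K_2 + tK_1`: vertices `0` and `1` form an edge
joined to an independent set of `t` further vertices. -/
def book (t : ℕ) : SimpleGraph (Fin (t + 2)) where
  Adj x y := x ≠ y ∧ ((x : ℕ) < 2 ∨ (y : ℕ) < 2)
  symm := by
    constructor
    intro x y ⟨hne, h⟩
    exact ⟨hne.symm, by tauto⟩
  loopless := by
    constructor
    intro x ⟨hne, _⟩
    exact hne rfl

section AuxiliaryLemmas

open Finset

/-! ### Auxiliary lemmas for the upper bound -/

lemma exists_rainbow (n : ℕ) (c : Sym2 (Fin n) → ℕ)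
    (hne : {e : Sym2 (Fin n) | ¬ e.IsDiag}.Nonempty) :
    ∃ R : SimpleGraph (Fin n), R.edgeSet.ncard = (c '' {e : Sym2 (Fin n) | ¬ e.IsDiag}).ncard ∧
      Set.InjOn c R.edgeSet := by
  classical
  have : Nonempty (Sym2 (Fin n)) := ⟨hne.choose⟩
  set D := {e : Sym2 (Fin n) | ¬ e.IsDiag} with hD
  set g := Function.invFunOn c D with hg
  set E := g '' (c '' D) with hE
  have hmem : ∀ i ∈ c '' D, g i ∈ D ∧ c (g i) = i := by
    intro i hi
    obtain ⟨e, he, hce⟩ := hi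
    exact ⟨Function.invFunOn_mem ⟨e, he, hce⟩, Function.invFunOn_eq ⟨e, he, hce⟩⟩
  have hED : E ⊆ D := by
    rintro e ⟨i, hi, rfl⟩; exact (hmem i hi).1
  refine ⟨SimpleGraph.fromEdgeSet E, ?_, ?_⟩
  · rw [SimpleGraph.edgeSet_fromEdgeSet]
    have : E \ Sym2.diagSet = E := by
      ext e
      simp only [Set.mem_diff, Sym2.mem_diagSet, and_iff_left_iff_imp]
      intro h1; exact hED h1
    rw [this, hE]
    apply Set.ncard_image_of_injOn
    intro i hi j hj hij
    rw [← (hmem i hi).2, ← (hmem j hj).2, hij]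
  · rw [SimpleGraph.edgeSet_fromEdgeSet]
    intro e he e' he' hc
    obtain ⟨i, hi, rfl⟩ := he.1
    obtain ⟨j, hj, rfl⟩ := he'.1
    rw [(hmem i hi).2, (hmem j hj).2] at hc
    rw [hc]


set_option maxHeartbeats 1000000 in
lemma exists_dense_pair (t n : ℕ) (ht : 3 ≤ t) (hn : 1 ≤ n) (R : SimpleGraph (Fin n))
    [DecidableRel R.Adj]
    (hcard : (t+1)*(Nat.sqrt n+1)*n + 1 ≤ R.edgeFinset.card) :
    ∃ u v : Fin n, u ≠ v ∧
      t + 1 ≤ (Finset.univ.filter fun w => R.Adj u w ∧ R.Adj v w).card := by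
  by_contra hcon
  push_neg at hcon
  set e := R.edgeFinset.card with hedef
  have hcodeg_le : ∀ u v : Fin n, u ≠ v →
      (Finset.univ.filter fun w => R.Adj u w ∧ R.Adj v w).card ≤ t := by
    intro u v huv
    have := hcon u v huv
    omega
  have hdeg' : ∀ u : Fin n, (Finset.univ.filter fun w => R.Adj u w).card = R.degree u := by
    intro u
    have : Finset.univ.filter (fun w => R.Adj u w) = R.neighborFinset u := by
      ext w; simp [SimpleGraph.mem_neighborFinset]
    rw [this]; rfl
  have hcodeg_diag : ∀ u : Fin n,
      (Finset.univ.filter fun w => R.Adj u w ∧ R.Adj u w).card = R.degree u := by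
    intro u
    rw [← hdeg'  u]
    congr 1
    ext w
    simp
  have hdeg : ∀ w : Fin n, (Finset.univ.filter fun u => R.Adj u w).card = R.degree w := by
    intro w
    rw [← hdeg' w]
    congr 1
    ext u
    simp [SimpleGraph.adj_comm]
  have key : (∑ u : Fin n, ∑ v : Fin n,
        (Finset.univ.filter fun w => R.Adj u w ∧ R.Adj v w).card)
      = ∑ w : Fin n, (R.degree w)^2 := by
    have h1 : ∀ u v : Fin n, (Finset.univ.filter fun w => R.Adj u w ∧ R.Adj v w).card
        = ∑ w : Fin n, (if R.Adj u w then 1 else 0) * (if R.Adj v w then 1 else 0) := by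
      intro u v
      rw [Finset.card_filter]
      apply Finset.sum_congr rfl
      intro w _
      split_ifs <;> simp_all
    calc (∑ u : Fin n, ∑ v : Fin n,
            (Finset.univ.filter fun w => R.Adj u w ∧ R.Adj v w).card)
        = ∑ u : Fin n, ∑ v : Fin n, ∑ w : Fin n,
            (if R.Adj u w then 1 else 0) * (if R.Adj v w then 1 else 0) := by
          exact Finset.sum_congr rfl fun u _ => Finset.sum_congr rfl fun v _ => h1 u v
      _ = ∑ u : Fin n, ∑ w : Fin n, ∑ v : Fin n,
            (if R.Adj u w then 1 else 0) * (if R.Adj v w then 1 else 0) := by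
          exact Finset.sum_congr rfl fun u _ => Finset.sum_comm
      _ = ∑ w : Fin n, ∑ u : Fin n, ∑ v : Fin n,
            (if R.Adj u w then 1 else 0) * (if R.Adj v w then 1 else 0) := Finset.sum_comm
      _ = ∑ w : Fin n, (R.degree w)^2 := by
          apply Finset.sum_congr rfl
          intro w _
          rw [← Finset.sum_mul_sum]
          rw [← Finset.card_filter, hdeg w, sq]
  have hsum_deg : ∑ u : Fin n, R.degree u = 2 * e := R.sum_degrees_eq_twice_card_edges
  have hbound : ∑ w : Fin n, (R.degree w)^2 ≤ 2 * e + t * n^2 := by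
    rw [← key]
    have hrow : ∀ u : Fin n, (∑ v : Fin n,
        (Finset.univ.filter fun w => R.Adj u w ∧ R.Adj v w).card) ≤ R.degree u + t * n := by
      intro u
      have hsplit : (∑ v : Fin n,
          (Finset.univ.filter fun w => R.Adj u w ∧ R.Adj v w).card)
          = (∑ v ∈ Finset.univ.erase u,
              (Finset.univ.filter fun w => R.Adj u w ∧ R.Adj v w).card)
            + (Finset.univ.filter fun w => R.Adj u w ∧ R.Adj u w).card := by
        rw [Finset.sum_erase_add]
        exact Finset.mem_univ u
      rw [hsplit, hcodeg_diag u]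
      have hrest : (∑ v ∈ Finset.univ.erase u,
          (Finset.univ.filter fun w => R.Adj u w ∧ R.Adj v w).card) ≤ t * n := by
        calc (∑ v ∈ Finset.univ.erase u,
            (Finset.univ.filter fun w => R.Adj u w ∧ R.Adj v w).card)
            ≤ ∑ _v ∈ Finset.univ.erase u, t := by
              apply Finset.sum_le_sum
              intro v hv
              exact hcodeg_le u v (Finset.ne_of_mem_erase hv).symm
          _ = (Finset.univ.erase u).card * t := by rw [Finset.sum_const, smul_eq_mul]
          _ ≤ n * t := by
              apply Nat.mul_le_mul_right
              calc (Finset.univ.erase u).card ≤ (Finset.univ : Finset (Fin n)).card :=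
                    Finset.card_le_card (Finset.erase_subset _ _)
                _ = n := by simp
          _ = t * n := Nat.mul_comm n t
      omega
    calc (∑ u : Fin n, ∑ v : Fin n,
          (Finset.univ.filter fun w => R.Adj u w ∧ R.Adj v w).card)
        ≤ ∑ u : Fin n, (R.degree u + t * n) := Finset.sum_le_sum fun u _ => hrow u
      _ = 2 * e + t * n^2 := by
          rw [Finset.sum_add_distrib, hsum_deg, Finset.sum_const, smul_eq_mul]
          have : (Finset.univ : Finset (Fin n)).card = n := by simp
          rw [this, sq]
          ring
  have hCS : ((2:ℤ) * e)^2 ≤ n * (2 * e + t * n^2) := by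
    have h1 : ((∑ u : Fin n, (R.degree u : ℤ)))^2
        ≤ ((Finset.univ : Finset (Fin n)).card : ℤ) * ∑ u : Fin n, (R.degree u : ℤ)^2 :=
      sq_sum_le_card_mul_sum_sq
    have h2 : (∑ u : Fin n, (R.degree u : ℤ)) = 2 * e := by
      have h2' := congrArg (fun k : ℕ => (k : ℤ)) hsum_deg
      push_cast at h2'
      exact h2'
    have h3 : (∑ u : Fin n, (R.degree u : ℤ)^2) ≤ 2 * e + t * n^2 := by
      calc (∑ u : Fin n, (R.degree u : ℤ)^2) = ((∑ u : Fin n, (R.degree u)^2 : ℕ) : ℤ) := by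
            push_cast; ring_nf
        _ ≤ ((2 * e + t * n^2 : ℕ) : ℤ) := by exact_mod_cast hbound
        _ = 2 * e + t * n^2 := by push_cast; ring
    calc ((2:ℤ) * e)^2 = (∑ u : Fin n, (R.degree u : ℤ))^2 := by rw [h2]
      _ ≤ ((Finset.univ : Finset (Fin n)).card : ℤ) * ∑ u : Fin n, (R.degree u : ℤ)^2 := h1
      _ ≤ n * (2 * e + t * n^2) := by
          have hc : ((Finset.univ : Finset (Fin n)).card : ℤ) = n := by simp
          rw [hc]
          apply mul_le_mul_of_nonneg_left h3 (by positivity)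
  -- numeric contradiction
  have hs : (n : ℤ) ≤ ((Nat.sqrt n : ℤ) + 1)^2 := by
    have := Nat.lt_succ_sqrt n
    push_cast
    nlinarith [this]
  have he1 : ((t:ℤ)+1) * ((Nat.sqrt n : ℤ)+1) * n + 1 ≤ e := by exact_mod_cast hcard
  have ht' : (3:ℤ) ≤ t := by exact_mod_cast ht
  have hn' : (1:ℤ) ≤ n := by exact_mod_cast hn
  have hs0 : (0:ℤ) ≤ (Nat.sqrt n : ℤ) := by positivity
  have he0 : (0:ℤ) ≤ e := by positivity
  have h44 : (4:ℤ) ≤ ((t:ℤ)+1) * ((Nat.sqrt n : ℤ)+1) := by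
    nlinarith [mul_nonneg (by linarith : (0:ℤ) ≤ (t:ℤ)) hs0]
  have hA0 : (0:ℤ) ≤ ((t:ℤ)+1) * ((Nat.sqrt n : ℤ)+1) * n := by positivity
  have h4n : (4:ℤ)*n ≤ e := by nlinarith [mul_le_mul_of_nonneg_right h44 (by linarith : (0:ℤ) ≤ (n:ℤ))]
  have hen : 4*(n:ℤ)*e ≤ e*e := mul_le_mul_of_nonneg_right h4n he0
  have hAe : ((t:ℤ)+1) * ((Nat.sqrt n : ℤ)+1) * n ≤ e := by linarith
  have hee : ((t:ℤ)+1)^2 * n^3 ≤ e^2 := by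
    have hsq := pow_le_pow_left₀ hA0 hAe 2
    have hmul := mul_le_mul_of_nonneg_left hs (by positivity : (0:ℤ) ≤ ((t:ℤ)+1)^2 * n^2)
    nlinarith [hsq, hmul]
  have hCS' : 4*(e:ℤ)^2 ≤ 2*((n:ℤ)*e) + t*n^3 := by linear_combination hCS
  have hen' : 4*((n:ℤ)*e) ≤ e^2 := by linear_combination hen
  have key2 : 14 * (e:ℤ)^2 ≤ 4*t*n^3 := by linarith
  have hn3 : (1:ℤ) ≤ (n:ℤ)^3 := by nlinarith
  have hcoef : (0:ℤ) ≤ 14*((t:ℤ)+1)^2 - 4*t := by nlinarith [sq_nonneg (t:ℤ)]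
  have hfin := mul_le_mul_of_nonneg_left hn3 hcoef
  have hlast : 14*((t:ℤ)+1)^2 - 4*t ≤ (14*((t:ℤ)+1)^2 - 4*t) * n^3 := by linarith [hfin]
  nlinarith [hlast, key2, hee, sq_nonneg (t:ℤ)]


lemma build_copy (t n : ℕ) (ht : 3 ≤ t) (c : Sym2 (Fin n) → ℕ)
    (R : SimpleGraph (Fin n)) [DecidableRel R.Adj]
    (hinj : Set.InjOn c R.edgeSet)
    (u v : Fin n) (huv : u ≠ v)
    (hW : t + 1 ≤ (Finset.univ.filter fun w => R.Adj u w ∧ R.Adj v w).card) :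
    ∃ φ : Fin (t+2) → Fin n, Function.Injective φ ∧
      ∀ i : ℕ, matchingFamily (colorClass (book t) φ c i) := by
  classical
  set c0 := c s(u, v) with hc0
  set W := Finset.univ.filter fun w => R.Adj u w ∧ R.Adj v w with hWdef
  set B := W.filter (fun w => c s(u, w) = c0 ∨ c s(v, w) = c0) with hBdef
  -- every common neighbor differs from u and v
  have hWmem : ∀ w ∈ W, R.Adj u w ∧ R.Adj v w := by
    intro w hw
    rw [hWdef] at hw
    exact (Finset.mem_filter.1 hw).2
  have hWne : ∀ w ∈ W, w ≠ u ∧ w ≠ v := by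
    intro w hw
    exact ⟨((hWmem w hw).1).ne', ((hWmem w hw).2).ne'⟩
  -- B has at most one element
  have hB1 : B.card ≤ 1 := by
    rw [Finset.card_le_one]
    intro a ha b hb
    by_contra hab
    rw [hBdef, Finset.mem_filter] at ha hb
    -- pick a witness edge for a and for b
    have hEa : ∃ x, (x = u ∨ x = v) ∧ s(x, a) ∈ R.edgeSet ∧ c s(x, a) = c0 := by
      rcases ha.2 with h | h
      · exact ⟨u, Or.inl rfl, (R.mem_edgeSet).2 (hWmem a ha.1).1, h⟩
      · exact ⟨v, Or.inr rfl, (R.mem_edgeSet).2 (hWmem a ha.1).2, h⟩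
    have hEb : ∃ x, (x = u ∨ x = v) ∧ s(x, b) ∈ R.edgeSet ∧ c s(x, b) = c0 := by
      rcases hb.2 with h | h
      · exact ⟨u, Or.inl rfl, (R.mem_edgeSet).2 (hWmem b hb.1).1, h⟩
      · exact ⟨v, Or.inr rfl, (R.mem_edgeSet).2 (hWmem b hb.1).2, h⟩
    obtain ⟨x, hx, hxe, hxc⟩ := hEa
    obtain ⟨y, hy, hye, hyc⟩ := hEb
    have heq : s(x, a) = s(y, b) := hinj hxe hye (hxc.trans hyc.symm)
    rw [Sym2.eq_iff] at heq
    have hau : a ≠ u ∧ a ≠ v := hWne a ha.1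
    have hbu : b ≠ u ∧ b ≠ v := hWne b hb.1
    rcases heq with ⟨_, hab'⟩ | ⟨hxb, hay⟩
    · exact hab hab'
    · rcases hy with rfl | rfl
      · exact hau.1 hay
      · exact hau.2 hay
  -- good pages
  have hBsub : B ⊆ W := by rw [hBdef]; exact Finset.filter_subset _ _
  have hgood : t ≤ (W \ B).card := by
    have := Finset.card_sdiff_of_subset hBsub
    omega
  obtain ⟨P, hPsub, hPcard⟩ := Finset.exists_subset_card_eq hgood
  have hPW : P ⊆ W := hPsub.trans (Finset.sdiff_subset)
  have hPgood : ∀ w ∈ P, c s(u, w) ≠ c0 ∧ c s(v, w) ≠ c0 := by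
    intro w hw
    have hm := hPsub hw
    rw [Finset.mem_sdiff] at hm
    have hnB := hm.2
    constructor
    · intro h
      exact hnB (by rw [hBdef, Finset.mem_filter]; exact ⟨hm.1, Or.inl h⟩)
    · intro h
      exact hnB (by rw [hBdef, Finset.mem_filter]; exact ⟨hm.1, Or.inr h⟩)
  -- enumeration of P
  set g : Fin t ≃o {x // x ∈ P} := P.orderIsoOfFin hPcard with hgdef
  -- the embedding
  set φ : Fin (t+2) → Fin n := fun i =>
    if (i : ℕ) = 0 then u else if (i : ℕ) = 1 then v
    else (g ⟨(i : ℕ) - 2, by omega⟩ : {x // x ∈ P}) with hφdef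
  have hval0 : ∀ i : Fin (t+2), (i : ℕ) = 0 → φ i = u := by
    intro i hi
    rw [hφdef]
    simp only
    rw [if_pos hi]
  have hval1 : ∀ i : Fin (t+2), (i : ℕ) = 1 → φ i = v := by
    intro i hi
    rw [hφdef]
    simp only
    rw [if_neg (by omega), if_pos hi]
  have hvalp : ∀ i : Fin (t+2), 2 ≤ (i : ℕ) →
      φ i = ((g ⟨(i : ℕ) - 2, by omega⟩ : {x // x ∈ P}) : Fin n) := by
    intro i hi
    rw [hφdef]
    simp only
    rw [if_neg (by omega), if_neg (by omega)]
  have hφpage : ∀ i : Fin (t+2), 2 ≤ (i : ℕ) → (φ i) ∈ P := by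
    intro i hi
    rw [hvalp i hi]
    exact (g ⟨(i : ℕ) - 2, by omega⟩).2
  have hφinj : Function.Injective φ := by
    intro i j hij
    apply Fin.ext
    by_cases hi0 : (i:ℕ) = 0
    · by_cases hj0 : (j:ℕ) = 0
      · omega
      · by_cases hj1 : (j:ℕ) = 1
        · exfalso; rw [hval0 i hi0, hval1 j hj1] at hij; exact huv hij
        · exfalso
          have hp := hφpage j (by omega)
          rw [← hij, hval0 i hi0] at hp
          exact (hWne u (hPW hp)).1 rfl
    · by_cases hi1 : (i:ℕ) = 1
      · by_cases hj0 : (j:ℕ) = 0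
        · exfalso; rw [hval1 i hi1, hval0 j hj0] at hij; exact huv hij.symm
        · by_cases hj1 : (j:ℕ) = 1
          · omega
          · exfalso
            have hp := hφpage j (by omega)
            rw [← hij, hval1 i hi1] at hp
            exact (hWne v (hPW hp)).2 rfl
      · by_cases hj0 : (j:ℕ) = 0
        · exfalso
          have hp := hφpage i (by omega)
          rw [hij, hval0 j hj0] at hp
          exact (hWne u (hPW hp)).1 rfl
        · by_cases hj1 : (j:ℕ) = 1
          · exfalso
            have hp := hφpage i (by omega)
            rw [hij, hval1 j hj1] at hp
            exact (hWne v (hPW hp)).2 rfl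
          · rw [hvalp i (by omega), hvalp j (by omega)] at hij
            have h2 := g.injective (Subtype.ext hij)
            have h3 := congrArg Fin.val h2
            simp only at h3
            omega
  -- edge classification
  have hedge : ∀ x y : Fin (t+2), (book t).Adj x y → ¬((x:ℕ) < 2 ∧ (y:ℕ) < 2) →
      s(φ x, φ y) ∈ R.edgeSet ∧ c s(φ x, φ y) ≠ c0 := by
    intro x y hadj hnot
    obtain ⟨hne, hlt⟩ := hadj
    by_cases hx2 : 2 ≤ (x:ℕ)
    · have hy2 : (y:ℕ) < 2 := by omega
      have hpx : φ x ∈ P := hφpage x hx2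
      have hgood2 := hPgood _ hpx
      have hmem := hWmem _ (hPW hpx)
      by_cases hy0 : (y:ℕ) = 0
      · rw [hval0 y hy0, Sym2.eq_swap]
        exact ⟨(R.mem_edgeSet).2 hmem.1, hgood2.1⟩
      · rw [hval1 y (by omega), Sym2.eq_swap]
        exact ⟨(R.mem_edgeSet).2 hmem.2, hgood2.2⟩
    · have hy2 : 2 ≤ (y:ℕ) := by omega
      have hpy : φ y ∈ P := hφpage y hy2
      have hgood2 := hPgood _ hpy
      have hmem := hWmem _ (hPW hpy)
      by_cases hx0 : (x:ℕ) = 0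
      · rw [hval0 x hx0]
        exact ⟨(R.mem_edgeSet).2 hmem.1, hgood2.1⟩
      · rw [hval1 x (by omega)]
        exact ⟨(R.mem_edgeSet).2 hmem.2, hgood2.2⟩
  have hhub : ∀ x y : Fin (t+2), (x:ℕ) < 2 → (y:ℕ) < 2 → x ≠ y →
      s(φ x, φ y) = s(u, v) := by
    intro x y hx hy hxy
    have hxyv : (x:ℕ) ≠ (y:ℕ) := fun h => hxy (Fin.ext h)
    by_cases hx0 : (x:ℕ) = 0
    · rw [hval0 x hx0, hval1 y (by omega)]
    · rw [hval1 x (by omega), hval0 y (by omega), Sym2.eq_swap]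
  -- conclusion
  refine ⟨φ, hφinj, ?_⟩
  intro i0 a b b' h1 h2
  obtain ⟨hadj1, hcab⟩ := h1
  obtain ⟨hadj2, hcab'⟩ := h2
  have habne : a ≠ b := hadj1.1
  have habne' : a ≠ b' := hadj2.1
  have hcolor : c s(φ a, φ b) = c s(φ a, φ b') := hcab.trans hcab'.symm
  by_cases hp1 : (a:ℕ) < 2 ∧ (b:ℕ) < 2 <;> by_cases hp2 : (a:ℕ) < 2 ∧ (b':ℕ) < 2
  · -- both hub pairs
    have hna : (a:ℕ) ≠ (b:ℕ) := fun h => habne (Fin.ext h)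
    have hna' : (a:ℕ) ≠ (b':ℕ) := fun h => habne' (Fin.ext h)
    apply Fin.ext
    omega
  · exfalso
    have he2 := hedge a b' hadj2 hp2
    rw [hhub a b hp1.1 hp1.2 habne] at hcolor
    exact he2.2 (hcolor.symm.trans hc0.symm)
  · exfalso
    have he1 := hedge a b hadj1 hp1
    rw [hhub a b' hp2.1 hp2.2 habne'] at hcolor
    exact he1.2 (hcolor.trans hc0.symm)
  · have he1 := hedge a b hadj1 hp1
    have he2 := hedge a b' hadj2 hp2
    have heq := hinj he1.1 he2.1 hcolor
    rw [Sym2.eq_iff] at heq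
    rcases heq with ⟨_, hbb⟩ | ⟨hab', hba⟩
    · exact hφinj hbb
    · exact absurd (hφinj hba).symm habne


lemma upper_mem (t n : ℕ) (ht : 3 ≤ t) (hn : 1 ≤ n) (c : Sym2 (Fin n) → ℕ)
    (hc : (t+1)*(Nat.sqrt n+1)*n + 1 ≤ numColors n c) :
    HasFColoredCopy matchingFamily (book t) c := by
  classical
  have hne : {e : Sym2 (Fin n) | ¬ e.IsDiag}.Nonempty := by
    by_contra h
    rw [Set.not_nonempty_iff_eq_empty] at h
    rw [numColors, h, Set.image_empty, Set.ncard_empty] at hc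
    omega
  obtain ⟨R, hRcard, hRinj⟩ := exists_rainbow n c hne
  haveI : DecidableRel R.Adj := Classical.decRel _
  have hcard : (t+1)*(Nat.sqrt n+1)*n + 1 ≤ R.edgeFinset.card := by
    have h1 : R.edgeFinset.card = R.edgeSet.ncard := by
      rw [Set.ncard_eq_toFinset_card']; congr 1
    rw [h1, hRcard]; exact hc
  obtain ⟨u, v, huv, hW⟩ := exists_dense_pair t n ht hn R hcard
  obtain ⟨φ, hφinj, hmatch⟩ := build_copy t n ht c R hRinj u v huv hW
  exact ⟨φ, hφinj, fun i _ => hmatch i⟩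

/-! ### Auxiliary lemmas for the lower bound -/


/-- Point-line incidence graph of the affine plane over `ZMod q`. -/
def incGraph (q : ℕ) : SimpleGraph (ZMod q × ZMod q × Bool) where
  Adj x y :=
    (x.2.2 = false ∧ y.2.2 = true ∧ x.2.1 = y.1 * x.1 + y.2.1) ∨
    (x.2.2 = true ∧ y.2.2 = false ∧ y.2.1 = x.1 * y.1 + x.2.1)
  symm := by
    constructor
    rintro x y (⟨h1, h2, h3⟩ | ⟨h1, h2, h3⟩)
    · exact Or.inr ⟨h2, h1, h3⟩
    · exact Or.inl ⟨h2, h1, h3⟩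
  loopless := by
    constructor
    rintro x (⟨h1, h2, _⟩ | ⟨h1, h2, _⟩) <;> rw [h1] at h2 <;> simp at h2

lemma incGraph_bool_ne (q : ℕ) {x y : ZMod q × ZMod q × Bool} (h : (incGraph q).Adj x y) :
    x.2.2 ≠ y.2.2 := by
  rcases h with ⟨h1, h2, _⟩ | ⟨h1, h2, _⟩ <;> rw [h1, h2] <;> simp

/-- At most one common neighbor. -/
lemma incGraph_common (q : ℕ) [Fact (Nat.Prime q)] {x y p p' : ZMod q × ZMod q × Bool} (hxy : x ≠ y)
    (h1 : (incGraph q).Adj x p) (h2 : (incGraph q).Adj y p)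
    (h3 : (incGraph q).Adj x p') (h4 : (incGraph q).Adj y p') : p = p' := by
  obtain ⟨x1, x2, xb⟩ := x
  obtain ⟨y1, y2, yb⟩ := y
  obtain ⟨p1, p2, pb⟩ := p
  obtain ⟨q1, q2, qb⟩ := p'
  have hb1 := incGraph_bool_ne q h1
  have hb2 := incGraph_bool_ne q h2
  have hb3 := incGraph_bool_ne q h3
  have hb4 := incGraph_bool_ne q h4
  simp only at hb1 hb2 hb3 hb4
  cases xb <;> cases yb <;> cases pb <;> cases qb <;>
    first
      | exact absurd rfl hb1
      | exact absurd rfl hb2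
      | exact absurd rfl hb3
      | exact absurd rfl hb4
      | skip
  · -- x, y points; p, p' lines
    rcases h1 with ⟨_, _, e1⟩ | ⟨h, _, _⟩; swap; · simp at h
    rcases h2 with ⟨_, _, e2⟩ | ⟨h, _, _⟩; swap; · simp at h
    rcases h3 with ⟨_, _, e3⟩ | ⟨h, _, _⟩; swap; · simp at h
    rcases h4 with ⟨_, _, e4⟩ | ⟨h, _, _⟩; swap; · simp at h
    simp only at e1 e2 e3 e4
    by_cases hp : p1 = q1
    · subst hp
      have : p2 = q2 := by linear_combination e3 - e1
      rw [this]
    · exfalso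
      have hx1y1 : x1 = y1 := by
        have hsub : (p1 - q1) * x1 = (p1 - q1) * y1 := by linear_combination e3 - e1 + e2 - e4
        exact mul_left_cancel₀ (sub_ne_zero.2 hp) hsub
      have hx2y2 : x2 = y2 := by rw [e1, e2, hx1y1]
      exact hxy (by rw [hx1y1, hx2y2])
  · -- x, y lines; p, p' points
    rcases h1 with ⟨h, _, _⟩ | ⟨_, _, e1⟩; · simp at h
    rcases h2 with ⟨h, _, _⟩ | ⟨_, _, e2⟩; · simp at h
    rcases h3 with ⟨h, _, _⟩ | ⟨_, _, e3⟩; · simp at h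
    rcases h4 with ⟨h, _, _⟩ | ⟨_, _, e4⟩; · simp at h
    simp only at e1 e2 e3 e4
    by_cases hx : x1 = y1
    · exfalso
      subst hx
      have : x2 = y2 := by linear_combination e2 - e1
      exact hxy (by rw [this])
    · have hpq1 : p1 = q1 := by
        have hsub : (x1 - y1) * p1 = (x1 - y1) * q1 := by linear_combination e2 - e1 + e3 - e4
        exact mul_left_cancel₀ (sub_ne_zero.2 hx) hsub
      have hpq2 : p2 = q2 := by rw [e1, e3, hpq1]
      rw [hpq1, hpq2]


lemma bool3 {a b c : Bool} (h1 : a ≠ b) (h2 : a ≠ c) (h3 : b ≠ c) : False := by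
  cases a <;> cases b <;> cases c <;> simp_all

lemma lower_coloring (t n q : ℕ) (ht : 3 ≤ t) (hq : Nat.Prime q) (hn : 2*q^2 ≤ n) :
    ∃ c : Sym2 (Fin n) → ℕ, q^3 ≤ numColors n c ∧
      ¬ HasFColoredCopy matchingFamily (book t) c := by
  classical
  haveI : Fact (Nat.Prime q) := ⟨hq⟩
  haveI : NeZero q := ⟨hq.ne_zero⟩
  -- embedding into Fin n
  have hcard : Fintype.card (ZMod q × ZMod q × Bool) ≤ Fintype.card (Fin n) := by
    simp [ZMod.card]
    nlinarith
  obtain ⟨f⟩ := Function.Embedding.nonempty_iff_card_le.2 hcard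
  set H := SimpleGraph.map f (incGraph q) with hHdef
  set enc : Sym2 (Fin n) → ℕ := fun e => ((Fintype.equivFin (Sym2 (Fin n))) e : ℕ) with hencdef
  have hencinj : Function.Injective enc := by
    intro a b hab
    exact (Fintype.equivFin (Sym2 (Fin n))).injective (Fin.ext hab)
  set c : Sym2 (Fin n) → ℕ := fun e => if e ∈ H.edgeSet then enc e + 1 else 0 with hcdef
  have hcH : ∀ e ∈ H.edgeSet, c e = enc e + 1 := by intro e he; rw [hcdef]; simp [he]
  have hcH' : ∀ e, e ∉ H.edgeSet → c e = 0 := by intro e he; rw [hcdef]; simp [he]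
  have hc0 : ∀ e, c e = 0 ↔ e ∉ H.edgeSet := by
    intro e
    constructor
    · intro h hmem
      rw [hcH e hmem] at h
      omega
    · exact hcH' e
  -- transfer of graph properties to H
  have Hadj : ∀ a b : Fin n, H.Adj a b ↔
      ∃ x y, (incGraph q).Adj x y ∧ f x = a ∧ f y = b := by
    intro a b
    rw [hHdef]
    exact SimpleGraph.map_adj f (incGraph q) a b
  have Htri : ∀ a b d : Fin n, H.Adj a b → H.Adj a d → H.Adj b d → False := by
    intro a b d h1 h2 h3
    obtain ⟨x, y, hxy, hfx, hfy⟩ := (Hadj a b).1 h1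
    obtain ⟨x', z, hxz, hfx', hfz⟩ := (Hadj a d).1 h2
    obtain ⟨y', z', hyz, hfy', hfz'⟩ := (Hadj b d).1 h3
    have hx : x' = x := f.injective (hfx'.trans hfx.symm)
    have hy : y' = y := f.injective (hfy'.trans hfy.symm)
    have hz : z' = z := f.injective (hfz'.trans hfz.symm)
    subst hx; subst hy; subst hz
    have b1 := incGraph_bool_ne q hxy
    have b2 := incGraph_bool_ne q hxz
    have b3 := incGraph_bool_ne q hyz
    exact bool3 b1 b2 b3
  have Hcommon : ∀ a b d d' : Fin n, a ≠ b → H.Adj a d → H.Adj b d →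
      H.Adj a d' → H.Adj b d' → d = d' := by
    intro a b d d' hab h1 h2 h3 h4
    obtain ⟨x, p, hxp, hfx, hfp⟩ := (Hadj a d).1 h1
    obtain ⟨y, p2, hyp, hfy, hfp2⟩ := (Hadj b d).1 h2
    obtain ⟨x', p3, hxp3, hfx', hfp3⟩ := (Hadj a d').1 h3
    obtain ⟨y', p4, hyp4, hfy', hfp4⟩ := (Hadj b d').1 h4
    have hx : x' = x := f.injective (hfx'.trans hfx.symm)
    have hy : y' = y := f.injective (hfy'.trans hfy.symm)
    have hp2 : p2 = p := f.injective (hfp2.trans hfp.symm)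
    have hp4 : p4 = p3 := f.injective (hfp4.trans hfp3.symm)
    rw [hx] at hxp3
    rw [hy] at hyp4
    rw [hp2] at hyp
    rw [hp4] at hyp4
    have hxy : x ≠ y := by
      intro h
      exact hab (by rw [← hfx, ← hfy, h])
    have := incGraph_common q hxy hxp hyp hxp3 hyp4
    rw [← hfp, ← hfp3, this]
  -- edge count: q^3 distinct colors
  have hcount : q^3 ≤ numColors n c := by
    set ψ : ZMod q × ZMod q × ZMod q → Sym2 (Fin n) :=
      fun x => s(f (x.1, x.2.1 * x.1 + x.2.2, false), f (x.2.1, x.2.2, true)) with hψdef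
    have hψE : ∀ x, ψ x ∈ H.edgeSet := by
      intro x
      rw [SimpleGraph.mem_edgeSet, Hadj]
      exact ⟨(x.1, x.2.1 * x.1 + x.2.2, false), (x.2.1, x.2.2, true),
        Or.inl ⟨rfl, rfl, rfl⟩, rfl, rfl⟩
    have hψinj : Function.Injective ψ := by
      intro a b hab
      rw [hψdef] at hab
      simp only [Sym2.eq_iff] at hab
      rcases hab with ⟨h1, h2⟩ | ⟨h1, h2⟩
      · have e1 := f.injective h1
        have e2 := f.injective h2
        obtain ⟨a1, a2, a3⟩ := a
        obtain ⟨b1, b2, b3⟩ := b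
        simp only [Prod.mk.injEq] at e1 e2
        obtain ⟨ha1, _, _⟩ := e1
        obtain ⟨hb1, hb2, _⟩ := e2
        simp only [Prod.mk.injEq]
        exact ⟨ha1, hb1, hb2⟩
      · have e1 := f.injective h1
        have := congrArg (fun z => z.2.2) e1
        simp at this
    -- the image of ψ gives q^3 colors
    have himg : (c '' (Set.range ψ)).ncard = q^3 := by
      have h1 : Set.InjOn c (Set.range ψ) := by
        intro e he e' he' hce
        obtain ⟨x, rfl⟩ := he
        obtain ⟨x', rfl⟩ := he'
        rw [hcH _ (hψE x), hcH _ (hψE x')] at hce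
        have h2 : enc (ψ x) = enc (ψ x') := by omega
        rw [hencinj h2]
      rw [Set.ncard_image_of_injOn h1, ← Set.image_univ,
        Set.ncard_image_of_injOn hψinj.injOn, Set.ncard_univ]
      simp [Nat.card_eq_fintype_card, ZMod.card]
      ring
    rw [numColors, ← himg]
    apply Set.ncard_le_ncard
    · intro z hz
      obtain ⟨e, he, rfl⟩ := hz
      obtain ⟨x, rfl⟩ := he
      exact ⟨ψ x, (SimpleGraph.not_isDiag_of_mem_edgeSet H (hψE x)), rfl⟩
    · exact Set.toFinite _
  refine ⟨c, hcount, ?_⟩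
  -- no properly colored book
  rintro ⟨φ, hφinj, hmatch⟩
  set v0 : Fin (t+2) := ⟨0, by omega⟩ with hv0
  set v1 : Fin (t+2) := ⟨1, by omega⟩ with hv1
  have hv01 : v0 ≠ v1 := by
    intro h
    have := congrArg Fin.val h
    simp [hv0, hv1] at this
  set pg : Fin t → Fin (t+2) := fun j => ⟨(j : ℕ) + 2, by omega⟩ with hpg
  have hpgne0 : ∀ j, pg j ≠ v0 := by
    intro j h
    have := congrArg Fin.val h
    simp [hpg, hv0] at this
  have hpgne1 : ∀ j, pg j ≠ v1 := by
    intro j h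
    have := congrArg Fin.val h
    simp [hpg, hv1] at this
  have hpginj : Function.Injective pg := by
    intro a b h
    have := congrArg Fin.val h
    simp [hpg] at this
    exact Fin.ext this
  have hadj01 : (book t).Adj v0 v1 := ⟨hv01, Or.inl (by simp [hv0])⟩
  have hadj0p : ∀ j, (book t).Adj v0 (pg j) := fun j => ⟨(hpgne0 j).symm, Or.inl (by simp [hv0])⟩
  have hadj1p : ∀ j, (book t).Adj v1 (pg j) := fun j => ⟨(hpgne1 j).symm, Or.inl (by simp [hv1])⟩
  -- matching property of color class 0, when nonempty
  have hmatch0 : ∀ (a b b' : Fin (t+2)), (book t).Adj a b → (book t).Adj a b' →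
      c s(φ a, φ b) = 0 → c s(φ a, φ b') = 0 → b = b' := by
    intro a b b' h1 h2 hc1 hc2
    have hne : (colorClass (book t) φ c 0).edgeSet.Nonempty :=
      ⟨s(a, b), by rw [SimpleGraph.mem_edgeSet]; exact ⟨h1, hc1⟩⟩
    exact hmatch 0 hne a b b' ⟨h1, hc1⟩ ⟨h2, hc2⟩
  by_cases h01 : H.Adj (φ v0) (φ v1)
  · -- triangle case
    -- pages bad for v0 resp. v1 are unique
    have hbad0 : ∀ j j' : Fin t, ¬ H.Adj (φ v0) (φ (pg j)) → ¬ H.Adj (φ v0) (φ (pg j')) → j = j' := by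
      intro j j' h h'
      have h0 : c s(φ v0, φ (pg j)) = 0 := hcH' _ (fun hm => h ((SimpleGraph.mem_edgeSet H).1 hm))
      have h0' : c s(φ v0, φ (pg j')) = 0 := hcH' _ (fun hm => h' ((SimpleGraph.mem_edgeSet H).1 hm))
      exact hpginj (hmatch0 v0 (pg j) (pg j') (hadj0p j) (hadj0p j') h0 h0')
    have hbad1 : ∀ j j' : Fin t, ¬ H.Adj (φ v1) (φ (pg j)) → ¬ H.Adj (φ v1) (φ (pg j')) → j = j' := by
      intro j j' h h'
      have h0 : c s(φ v1, φ (pg j)) = 0 := hcH' _ (fun hm => h ((SimpleGraph.mem_edgeSet H).1 hm))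
      have h0' : c s(φ v1, φ (pg j')) = 0 := hcH' _ (fun hm => h' ((SimpleGraph.mem_edgeSet H).1 hm))
      exact hpginj (hmatch0 v1 (pg j) (pg j') (hadj1p j) (hadj1p j') h0 h0')
    -- find a page adjacent (in H) to both hubs
    have : ∃ j : Fin t, H.Adj (φ v0) (φ (pg j)) ∧ H.Adj (φ v1) (φ (pg j)) := by
      by_contra hno
      push_neg at hno
      -- at most one bad page for each hub, but t ≥ 3
      have h3 : ∃ j0 j1 j2 : Fin t, j0 ≠ j1 ∧ j0 ≠ j2 ∧ j1 ≠ j2 :=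
        ⟨⟨0, by omega⟩, ⟨1, by omega⟩, ⟨2, by omega⟩, by
          constructor
          · intro h; have := congrArg Fin.val h; simp at this
          constructor
          · intro h; have := congrArg Fin.val h; simp at this
          · intro h; have := congrArg Fin.val h; simp at this⟩
      obtain ⟨j0, j1, j2, h01', h02, h12⟩ := h3
      -- each of j0 j1 j2 is bad for v0 or bad for v1
      have hb : ∀ j : Fin t, ¬ H.Adj (φ v0) (φ (pg j)) ∨ ¬ H.Adj (φ v1) (φ (pg j)) := by
        intro j
        by_contra h
        push_neg at h
        exact hno j h.1 h.2
      rcases hb j0 with h0 | h0 <;> rcases hb j1 with h1 | h1 <;> rcases hb j2 with h2 | h2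
      · exact h01' (hbad0 j0 j1 h0 h1)
      · exact h01' (hbad0 j0 j1 h0 h1) <;> skip
      all_goals first
        | exact h01' (hbad0 j0 j1 h0 h1)
        | exact h01' (hbad1 j0 j1 h0 h1)
        | exact h02 (hbad0 j0 j2 h0 h2)
        | exact h02 (hbad1 j0 j2 h0 h2)
        | exact h12 (hbad0 j1 j2 h1 h2)
        | exact h12 (hbad1 j1 j2 h1 h2)
    obtain ⟨j, hj0, hj1⟩ := this
    exact Htri (φ v0) (φ v1) (φ (pg j)) h01 hj0 hj1
  · -- C4 case
    have hc01 : c s(φ v0, φ v1) = 0 := hcH' _ (fun hm => h01 ((SimpleGraph.mem_edgeSet H).1 hm))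
    -- every page edge is in H
    have hall0 : ∀ j : Fin t, H.Adj (φ v0) (φ (pg j)) := by
      intro j
      by_contra h
      have h0 : c s(φ v0, φ (pg j)) = 0 := hcH' _ (fun hm => h ((SimpleGraph.mem_edgeSet H).1 hm))
      exact hpgne1 j (hmatch0 v0 v1 (pg j) hadj01 (hadj0p j) hc01 h0).symm
    have hall1 : ∀ j : Fin t, H.Adj (φ v1) (φ (pg j)) := by
      intro j
      by_contra h
      have h0 : c s(φ v1, φ (pg j)) = 0 := hcH' _ (fun hm => h ((SimpleGraph.mem_edgeSet H).1 hm))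
      have hc01' : c s(φ v1, φ v0) = 0 := by rwa [Sym2.eq_swap]
      exact hpgne0 j (hmatch0 v1 v0 (pg j) hadj01.symm (hadj1p j) hc01' h0).symm
    -- two distinct pages give a C4
    have hj01 : (⟨0, by omega⟩ : Fin t) ≠ ⟨1, by omega⟩ := by
      intro h; have := congrArg Fin.val h; simp at this
    have hφne : φ v0 ≠ φ v1 := fun h => hv01 (hφinj h)
    have := Hcommon (φ v0) (φ v1) (φ (pg ⟨0, by omega⟩)) (φ (pg ⟨1, by omega⟩)) hφne
      (hall0 _) (hall1 _) (hall0 _) (hall1 _)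
    exact hj01 (hpginj (hφinj this))


end AuxiliaryLemmas

/-- books: for every `t ≥ 3`, `Lr(n, B_t) = Θ(n^{3/2})`. -/
theorem local_antiRamsey_book (t : ℕ) (ht : 3 ≤ t) :
    ∃ c₁ c₂ : ℝ, 0 < c₁ ∧ 0 < c₂ ∧ ∃ N : ℕ, ∀ n : ℕ, N ≤ n →
      c₁ * (n : ℝ) ^ ((3 : ℝ) / 2) ≤ (fF matchingFamily (book t) n : ℝ) ∧
      (fF matchingFamily (book t) n : ℝ) ≤ c₂ * (n : ℝ) ^ ((3 : ℝ) / 2) := by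
  refine ⟨1/64, 2*(t:ℝ)+3, by norm_num, by positivity, 100, ?_⟩
  intro n hn
  have hn1 : 1 ≤ n := by omega
  have hn0 : (0:ℝ) < n := by exact_mod_cast hn1
  have hrpow : (n:ℝ) ^ ((3:ℝ)/2) = n * Real.sqrt n := by
    have h32 : ((3:ℝ)/2) = 1 + 1/2 := by norm_num
    rw [h32, Real.rpow_add hn0, Real.rpow_one, ← Real.sqrt_eq_rpow]
  set S := {k | ∀ c : Sym2 (Fin n) → ℕ, k ≤ numColors n c →
    HasFColoredCopy matchingFamily (book t) c} with hSdef
  have hfF : fF matchingFamily (book t) n = sInf S := rfl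
  have hmem : ((t+1)*(Nat.sqrt n+1)*n + 1) ∈ S := fun c hc => upper_mem t n ht hn1 c hc
  -- basic real facts about sqrt
  have hsq1 : (1:ℝ) ≤ Real.sqrt n := Real.one_le_sqrt.2 (by exact_mod_cast hn1)
  have hsqle : (Nat.sqrt n : ℝ) ≤ Real.sqrt n := by
    have h1 : ((Nat.sqrt n : ℝ)) = Real.sqrt ((Nat.sqrt n : ℝ)^2) :=
      (Real.sqrt_sq (by positivity)).symm
    rw [h1]
    apply Real.sqrt_le_sqrt
    exact_mod_cast Nat.sqrt_le' n
  constructor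
  · -- lower bound
    have h8 : 1 ≤ n/8 := by omega
    set m := Nat.sqrt (n/8) with hmdef
    have hm1 : 1 ≤ m := by
      have h2 := Nat.sqrt_le_sqrt h8
      simpa using h2
    obtain ⟨qp, hqp, hq1, hq2⟩ := Nat.exists_prime_lt_and_le_two_mul m (by omega)
    have hmm : m * m ≤ n/8 := Nat.sqrt_le (n/8)
    have hq2n : 2*qp^2 ≤ n := by
      have h1 : qp * qp ≤ (2*m) * (2*m) := Nat.mul_le_mul hq2 hq2
      have h2 : (n/8) * 8 ≤ n := Nat.div_mul_le_self n 8
      calc 2*qp^2 = 2*(qp*qp) := by ring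
        _ ≤ 2*((2*m)*(2*m)) := by omega
        _ = 8*(m*m) := by ring
        _ ≤ 8*(n/8) := by omega
        _ = (n/8)*8 := by ring
        _ ≤ n := h2
    obtain ⟨cstar, hcount, hnocopy⟩ := lower_coloring t n qp ht hqp hq2n
    have hSlb : ∀ k ∈ S, qp^3 + 1 ≤ k := by
      intro k hk
      by_contra h
      push_neg at h
      exact hnocopy (hk cstar (le_trans (by omega) hcount))
    have hlow : qp^3 + 1 ≤ sInf S := le_csInf ⟨_, hmem⟩ hSlb
    -- n ≤ 16 qp^2
    have hn16 : n ≤ 16 * qp^2 := by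
      have h1 := Nat.lt_succ_sqrt (n/8)
      have h2 : (m+1)*(m+1) ≤ qp*qp := Nat.mul_le_mul hq1 hq1
      have h3 : n/8 < qp*qp := lt_of_lt_of_le h1 h2
      have h4 : n < 8*(qp*qp) := by omega
      calc n ≤ 8*(qp*qp) := le_of_lt h4
        _ ≤ 16*qp^2 := by ring_nf; omega
    have hn16R : (n:ℝ) ≤ (4*qp)^2 := by
      have : ((n:ℕ):ℝ) ≤ ((16*qp^2 : ℕ):ℝ) := by exact_mod_cast hn16
      calc (n:ℝ) ≤ ((16*qp^2 : ℕ):ℝ) := this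
        _ = (4*qp)^2 := by push_cast; ring
    have hsqn : Real.sqrt n ≤ 4*qp := by
      have := Real.sqrt_le_sqrt hn16R
      rwa [Real.sqrt_sq (by positivity)] at this
    have hfin : (1:ℝ)/64 * (n * Real.sqrt n) ≤ (qp:ℝ)^3 := by
      have hnn : (0:ℝ) ≤ (n:ℝ) := le_of_lt hn0
      have h1 : (n:ℝ) * Real.sqrt n ≤ (16*qp^2) * (4*qp) := by
        apply mul_le_mul _ hsqn (Real.sqrt_nonneg _) (by positivity)
        calc (n:ℝ) ≤ (4*qp)^2 := hn16R
          _ = 16*qp^2 := by ring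
      calc (1:ℝ)/64 * (n * Real.sqrt n) ≤ (1:ℝ)/64 * ((16*qp^2) * (4*qp)) := by linarith
        _ = (qp:ℝ)^3 := by ring
    have hlowR : ((qp:ℝ)^3 + 1) ≤ (fF matchingFamily (book t) n : ℝ) := by
      rw [hfF]
      exact_mod_cast hlow
    rw [hrpow]
    linarith
  · -- upper bound
    have hup : sInf S ≤ (t+1)*(Nat.sqrt n+1)*n + 1 := Nat.sInf_le hmem
    have hupR : (fF matchingFamily (book t) n : ℝ) ≤ ((t:ℝ)+1)*((Nat.sqrt n : ℝ)+1)*n + 1 := by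
      rw [hfF]
      calc ((sInf S : ℕ) : ℝ) ≤ (((t+1)*(Nat.sqrt n+1)*n + 1 : ℕ) : ℝ) := by exact_mod_cast hup
        _ = ((t:ℝ)+1)*((Nat.sqrt n : ℝ)+1)*n + 1 := by push_cast; ring
    rw [hrpow]
    have h2a : (Nat.sqrt n : ℝ) + 1 ≤ 2 * Real.sqrt n := by linarith
    have hmul := mul_le_mul_of_nonneg_right h2a
      (show (0:ℝ) ≤ ((t:ℝ)+1)*n by positivity)
    have hn1R : (1:ℝ) ≤ n := by exact_mod_cast hn1
    have hprod1 : (1:ℝ) ≤ n * Real.sqrt n := by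
      calc (1:ℝ) = 1*1 := by ring
        _ ≤ n * Real.sqrt n := mul_le_mul hn1R hsq1 zero_le_one (le_trans zero_le_one hn1R)
    have htR : (3:ℝ) ≤ t := by exact_mod_cast ht
    nlinarith [hmul, hprod1, htR, hupR]
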